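/- arXiv:2307.05712 — 2 statements merged into one kernel-verified Lean document; each statement's English description precedes it below -/
import Mathlib

section
/- Let F ∈ ℤ[x,y], and suppose there exist a polynomial 𝔉 ∈ ℚ[t] of degree d ≥ 2 and a polynomial G ∈ ℚ[x,y] such that F = 𝔉 ∘ G. Then there is a constant c > 0 such that for all sufficiently large positive integers N, the number of integers in [N, 2N] which are values of F at integer points is at most c · N^{1/d}. -/
lemma key_bound (P : Polynomial ℚ) (d : ℕ) (hd : 1 ≤ d) (hP : P.natDegree = d) :
    ∃ C : ℝ, 0 < C ∧ ∀ t : ℚ, (|t| : ℝ) ≤ C + C * |((P.eval t : ℚ) : ℝ)| ^ (1 / (d : ℝ)) := by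
  set Q : Polynomial ℝ := P.map (Rat.castHom ℝ) with hQ
  have hQd : Q.natDegree = d := by rw [hQ, Polynomial.natDegree_map, hP]
  have hQne : Q ≠ 0 := by
    intro h; rw [h] at hQd; simp at hQd; omega
  set a : ℝ := |Q.leadingCoeff| with haa
  have ha : 0 < a := abs_pos.mpr (Polynomial.leadingCoeff_ne_zero.mpr hQne)
  set M : ℝ := ∑ i ∈ Finset.range d, |Q.coeff i| with hMM
  have hM : 0 ≤ M := Finset.sum_nonneg fun i _ => abs_nonneg _
  set R : ℝ := max 1 (2 * M / a) with hRR
  have hR1 : (1:ℝ) ≤ R := le_max_left _ _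
  -- core estimate
  have core : ∀ s : ℝ, R ≤ |s| → (a / 2) * |s| ^ d ≤ |Q.eval s| := by
    intro s hs
    have h1 : (1:ℝ) ≤ |s| := le_trans hR1 hs
    have h2 : 2 * M / a ≤ |s| := le_trans (le_max_right _ _) hs
    have h2' : 2 * M ≤ a * |s| := by
      rw [div_le_iff₀ ha] at h2; linarith [h2]
    have heval : Q.eval s = (∑ i ∈ Finset.range d, Q.coeff i * s ^ i) + Q.leadingCoeff * s ^ d := by
      rw [Polynomial.eval_eq_sum_range, hQd, Finset.sum_range_succ, ← hQd, Polynomial.coeff_natDegree, hQd]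
    have hsum : |∑ i ∈ Finset.range d, Q.coeff i * s ^ i| ≤ M * |s| ^ (d - 1) := by
      refine le_trans (Finset.abs_sum_le_sum_abs _ _) ?_
      rw [hMM, Finset.sum_mul]
      refine Finset.sum_le_sum fun i hi => ?_
      rw [abs_mul, abs_pow]
      refine mul_le_mul_of_nonneg_left ?_ (abs_nonneg _)
      exact pow_le_pow_right₀ h1 (Nat.le_sub_one_of_lt (Finset.mem_range.mp hi))
    have hpow : |s| ^ d = |s| * |s| ^ (d - 1) := by
      conv_lhs => rw [show d = (d-1)+1 by omega]
      ring
    have hlead : |Q.leadingCoeff * s ^ d| = a * |s| ^ d := by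
      rw [abs_mul, abs_pow]
    have htri : a * |s| ^ d - |∑ i ∈ Finset.range d, Q.coeff i * s ^ i| ≤ |Q.eval s| := by
      have h := abs_add_le (-(∑ i ∈ Finset.range d, Q.coeff i * s ^ i)) (Q.eval s)
      rw [heval] at h ⊢
      simp only [neg_add_cancel_left, abs_neg] at h
      rw [← hlead] at *
      linarith [h]
    have hMs : M * |s| ^ (d-1) ≤ (a/2) * |s| ^ d := by
      rw [hpow]
      have hposp : (0:ℝ) ≤ |s| ^ (d-1) := pow_nonneg (abs_nonneg _) _
      nlinarith [h2']
    nlinarith [htri, hsum, hMs]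
  have hdR : (0:ℝ) < d := by positivity
  set C' : ℝ := (2 / a) ^ (1 / (d:ℝ)) with hCC'
  have hC' : 0 < C' := Real.rpow_pos_of_pos (by positivity) _
  refine ⟨R + C', by linarith, fun t => ?_⟩
  have hQeval : Q.eval (t : ℝ) = ((P.eval t : ℚ) : ℝ) := by
    rw [hQ, Polynomial.eval_map]
    exact Polynomial.eval₂_at_apply (Rat.castHom ℝ) t
  set X : ℝ := |((P.eval t : ℚ) : ℝ)| with hX
  have hX0 : 0 ≤ X := abs_nonneg _
  have hrpow0 : 0 ≤ X ^ (1 / (d:ℝ)) := Real.rpow_nonneg hX0 _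
  rcases le_or_gt (|(t:ℝ)|) R with h | h
  · nlinarith [hrpow0, hC'.le]
  · have hcore := core (t:ℝ) h.le
    rw [hQeval, ← hX] at hcore
    have hs0 : (0:ℝ) ≤ |(t:ℝ)| := abs_nonneg _
    have hsd : |(t:ℝ)| ^ d ≤ 2 / a * X := by
      rw [div_mul_eq_mul_div, le_div_iff₀ ha]
      nlinarith [hcore]
    have h1 : |(t:ℝ)| = (|(t:ℝ)| ^ d) ^ (1 / (d:ℝ)) := by
      rw [← Real.rpow_natCast (|(t:ℝ)|) d, ← Real.rpow_mul hs0,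
        mul_one_div, div_self (ne_of_gt hdR), Real.rpow_one]
    have h2 : (|(t:ℝ)| ^ d) ^ (1 / (d:ℝ)) ≤ (2 / a * X) ^ (1 / (d:ℝ)) :=
      Real.rpow_le_rpow (by positivity) hsd (by positivity)
    rw [Real.mul_rpow (by positivity) hX0, ← hCC'] at h2
    nlinarith [h1, h2, hrpow0, hR1]


lemma denom_bound (G : MvPolynomial (Fin 2) ℚ) :
    ∃ D : ℤ, 0 < D ∧ ∀ v : Fin 2 → ℤ,
      ∃ k : ℤ, MvPolynomial.eval (fun i => ((v i : ℚ))) G * (D : ℚ) = (k : ℚ) := by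
  induction G using MvPolynomial.induction_on with
  | C q =>
      refine ⟨(q.den : ℤ), by exact_mod_cast q.pos, fun v => ⟨q.num, ?_⟩⟩
      simp [Rat.mul_den_eq_num]
  | add p q hp hq =>
      obtain ⟨D1, hD1, h1⟩ := hp
      obtain ⟨D2, hD2, h2⟩ := hq
      refine ⟨D1 * D2, mul_pos hD1 hD2, fun v => ?_⟩
      obtain ⟨k1, hk1⟩ := h1 v
      obtain ⟨k2, hk2⟩ := h2 v
      refine ⟨k1 * D2 + k2 * D1, ?_⟩
      push_cast
      rw [map_add, add_mul]
      rw [← hk1, ← hk2]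
      ring
  | mul_X p n hp =>
      obtain ⟨D, hD, h⟩ := hp
      refine ⟨D, hD, fun v => ?_⟩
      obtain ⟨k, hk⟩ := h v
      refine ⟨k * v n, ?_⟩
      push_cast
      rw [map_mul, MvPolynomial.eval_X]
      rw [← hk]
      ring


lemma cast_eval (F : MvPolynomial (Fin 2) ℤ) (P : Polynomial ℚ) (G : MvPolynomial (Fin 2) ℚ)
    (hcomp : MvPolynomial.map (Int.castRingHom ℚ) F = Polynomial.aeval G P) (v : Fin 2 → ℤ) :
    ((MvPolynomial.eval v F : ℤ) : ℚ)
      = Polynomial.eval (MvPolynomial.eval (fun i => ((v i : ℚ))) G) P := by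
  have h1 : ((MvPolynomial.eval v F : ℤ) : ℚ)
      = MvPolynomial.eval (fun i => ((v i : ℚ))) (MvPolynomial.map (Int.castRingHom ℚ) F) := by
    rw [MvPolynomial.eval_map]
    have := MvPolynomial.eval₂_comp_left (Int.castRingHom ℚ) (RingHom.id ℤ) v F
    simpa [Function.comp_def] using this
  rw [h1, hcomp]
  have h2 := Polynomial.aeval_algHom_apply
      (MvPolynomial.aeval (R := ℚ) (fun i => ((v i : ℚ)))) G P
  simp only [MvPolynomial.aeval_def, Algebra.algebraMap_self] at h2 ⊢
  simp [MvPolynomial.eval₂_id] at h2 ⊢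
  rw [← h2]


/-- **Lemma 2.1.** If `F ∈ ℤ[x,y]` can be written as `F = 𝔉 ∘ G` with
`𝔉 ∈ ℚ[t]` of degree `d ≥ 2` and `G ∈ ℚ[x,y]`, then `#ℛ_F([N, 2N]) ≪ N^{1/d}`. -/
theorem composed_value_density
    (F : MvPolynomial (Fin 2) ℤ) (d : ℕ) (hd : 2 ≤ d)
    (P : Polynomial ℚ) (hP : P.natDegree = d)
    (G : MvPolynomial (Fin 2) ℚ)
    (hcomp : MvPolynomial.map (Int.castRingHom ℚ) F = Polynomial.aeval G P) :
    ∃ c : ℝ, 0 < c ∧ ∀ᶠ N : ℕ in Filter.atTop,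
      ({m : ℤ | (N : ℤ) ≤ m ∧ m ≤ 2 * N ∧
          ∃ x y : ℤ, MvPolynomial.eval ![x, y] F = m}.ncard : ℝ)
        ≤ c * (N : ℝ) ^ (1 / (d : ℝ)) := by
  classical
  obtain ⟨C, hC, hkey⟩ := key_bound P d (by omega) hP
  obtain ⟨D, hD, hden⟩ := denom_bound G
  have hDR : (0:ℝ) < (D:ℝ) := by exact_mod_cast hD
  have hdpos : (0:ℝ) < (d:ℝ) := by positivity
  set c : ℝ := 2*(D:ℝ)*C + 2*(D:ℝ)*C*(2:ℝ) ^ (1/(d:ℝ)) + 3 with hc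
  have h2pow : (0:ℝ) < (2:ℝ) ^ (1/(d:ℝ)) := Real.rpow_pos_of_pos (by norm_num) _
  refine ⟨c, by positivity, ?_⟩
  filter_upwards [Filter.eventually_ge_atTop 1] with N hN
  set S : Set ℤ := {m : ℤ | (N : ℤ) ≤ m ∧ m ≤ 2 * N ∧
      ∃ x y : ℤ, MvPolynomial.eval ![x, y] F = m} with hS
  set f : ℤ → ℤ := fun m =>
    if h : ∃ k : ℤ, ∃ t : ℚ, Polynomial.eval t P = (m:ℚ) ∧ t * (D:ℚ) = (k:ℚ)
    then h.choose else 0 with hf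
  have hfS : ∀ m ∈ S, ∃ t : ℚ, Polynomial.eval t P = (m:ℚ) ∧ t * (D:ℚ) = ((f m : ℤ):ℚ) := by
    intro m hm
    obtain ⟨h1, h2, x, y, hxy⟩ := hm
    have hex : ∃ k : ℤ, ∃ t : ℚ, Polynomial.eval t P = (m:ℚ) ∧ t * (D:ℚ) = (k:ℚ) := by
      obtain ⟨k, hk⟩ := hden ![x, y]
      exact ⟨k, _, by rw [← cast_eval F P G hcomp ![x, y], hxy], hk⟩
    have : f m = hex.choose := by rw [hf]; exact dif_pos hex
    rw [this]
    exact hex.choose_spec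
  set r : ℝ := (D:ℝ) * (C + C * ((2:ℝ)*N) ^ (1/(d:ℝ))) with hr
  have hr0 : 0 ≤ r := by positivity
  set K : ℤ := ⌈r⌉ with hK
  have hK0 : 0 ≤ K := Int.ceil_nonneg hr0
  have hKr : (K:ℝ) < r + 1 := Int.ceil_lt_add_one r
  have hbound : ∀ m ∈ S, |((f m : ℤ):ℝ)| ≤ r := by
    intro m hm
    obtain ⟨t, ht1, ht2⟩ := hfS m hm
    obtain ⟨hm1, hm2, -⟩ := hm
    have hmN : (0:ℤ) ≤ m := le_trans (by exact_mod_cast Nat.zero_le N) hm1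
    have hmR : |((m:ℤ):ℝ)| ≤ (2:ℝ)*N := by
      rw [abs_of_nonneg (by exact_mod_cast hmN)]
      exact_mod_cast hm2
    have ht2R : ((t:ℝ)) * (D:ℝ) = ((f m : ℤ):ℝ) := by exact_mod_cast congrArg (Rat.cast : ℚ → ℝ) ht2
    have hPm : |((P.eval t : ℚ):ℝ)| ≤ (2:ℝ)*N := by rw [ht1]; push_cast; push_cast at hmR; exact hmR
    have hkt := hkey t
    have hmono : |((P.eval t : ℚ):ℝ)| ^ (1/(d:ℝ)) ≤ ((2:ℝ)*N) ^ (1/(d:ℝ)) :=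
      Real.rpow_le_rpow (abs_nonneg _) hPm (by positivity)
    have : (|t| : ℝ) ≤ C + C * ((2:ℝ)*N) ^ (1/(d:ℝ)) := by
      refine le_trans hkt ?_
      have := mul_le_mul_of_nonneg_left hmono hC.le
      linarith
    calc |((f m : ℤ):ℝ)| = |(t:ℝ)| * (D:ℝ) := by
            rw [← ht2R, abs_mul, abs_of_pos hDR]
      _ ≤ (C + C * ((2:ℝ)*N) ^ (1/(d:ℝ))) * (D:ℝ) := by
            refine mul_le_mul_of_nonneg_right ?_ hDR.le
            push_cast at this ⊢
            exact this
      _ = r := by rw [hr]; ring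
  have hmaps : ∀ m ∈ S, f m ∈ Set.Icc (-K) K := by
    intro m hm
    have h := hbound m hm
    have h1 : ((f m : ℤ):ℝ) ≤ K := le_trans (le_abs_self _) (le_trans h (Int.le_ceil r))
    have h2 : (-(K:ℝ)) ≤ ((f m : ℤ):ℝ) := by
      have := neg_abs_le ((f m : ℤ):ℝ)
      have h3 : r ≤ (K:ℝ) := Int.le_ceil r
      linarith
    constructor
    · exact_mod_cast h2
    · exact_mod_cast h1
  have hinj : Set.InjOn f S := by
    intro m1 hm1 m2 hm2 heq
    obtain ⟨t1, ht11, ht12⟩ := hfS m1 hm1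
    obtain ⟨t2, ht21, ht22⟩ := hfS m2 hm2
    have hDQ : ((D:ℚ)) ≠ 0 := by exact_mod_cast hD.ne'
    have : t1 = t2 := by
      have : t1 * (D:ℚ) = t2 * (D:ℚ) := by rw [ht12, ht22, heq]
      exact mul_right_cancel₀ hDQ this
    have : (m1:ℚ) = (m2:ℚ) := by rw [← ht11, ← ht21, this]
    exact_mod_cast this
  have hcard : S.ncard ≤ (Set.Icc (-K) K).ncard :=
    Set.ncard_le_ncard_of_injOn f hmaps hinj (Set.finite_Icc _ _)
  have hIcc : (Set.Icc (-K) K).ncard = (2*K+1).toNat := by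
    rw [← Finset.coe_Icc, Set.ncard_coe_finset, Int.card_Icc]
    congr 1
    ring
  have hcast : (((2*K+1).toNat : ℕ) : ℝ) = ((2*K+1 : ℤ) : ℝ) := by
    have h0 : (0:ℤ) ≤ 2*K+1 := by omega
    exact_mod_cast congrArg (Int.cast : ℤ → ℝ) (Int.toNat_of_nonneg h0)
  have hfinal : ((2*K+1 : ℤ) : ℝ) ≤ c * (N:ℝ) ^ (1/(d:ℝ)) := by
    have hK' : ((2*K+1 : ℤ) : ℝ) ≤ 2*r + 3 := by push_cast; linarith
    have hsplit : ((2:ℝ)*N) ^ (1/(d:ℝ)) = (2:ℝ) ^ (1/(d:ℝ)) * (N:ℝ) ^ (1/(d:ℝ)) :=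
      Real.mul_rpow (by norm_num) (by positivity)
    have hN1 : (1:ℝ) ≤ (N:ℝ) ^ (1/(d:ℝ)) :=
      Real.one_le_rpow (by exact_mod_cast hN) (by positivity)
    have hr' : 2*r + 3 ≤ c * (N:ℝ) ^ (1/(d:ℝ)) := by
      rw [hr, hsplit, hc]
      nlinarith [hN1, hDR, hC, h2pow, mul_pos hDR hC, mul_pos (mul_pos hDR hC) h2pow]
    linarith
  calc (S.ncard : ℝ) ≤ ((2*K+1).toNat : ℝ) := by exact_mod_cast le_trans hcard (le_of_eq hIcc)
    _ = ((2*K+1 : ℤ) : ℝ) := hcast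
    _ ≤ c * (N:ℝ) ^ (1/(d:ℝ)) := hfinal
end

section
/- Let F ∈ ℤ[x,y] have total degree 4 with F(0,0) = 0, and write F = F_4 + F_3 + F_2 + F_1 where F_i is the homogeneous degree-i part. If F_4 is negative semi-definite or indefinite, then the infimum of F(x,y) over (x,y) ∈ ℤ² is −∞, i.e., for every M there is (x,y) ∈ ℤ² with F(x,y) < −M. -/
/-- Evaluation of an integer polynomial in two variables at a real point. -/
noncomputable def evalReal (G : MvPolynomial (Fin 2) ℤ) (x y : ℝ) : ℝ :=
  MvPolynomial.aeval ![x, y] G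

/-- Negative semi-definite: nonpositive at every real point. -/
def NegSemidef2 (G : MvPolynomial (Fin 2) ℤ) : Prop :=
  ∀ x y : ℝ, evalReal G x y ≤ 0

/-- Indefinite: takes both positive and negative values on `ℝ² \ {(0,0)}`. -/
def Indefinite2 (G : MvPolynomial (Fin 2) ℤ) : Prop :=
  (∃ x y : ℝ, (x, y) ≠ (0, 0) ∧ 0 < evalReal G x y) ∧
  (∃ x y : ℝ, (x, y) ≠ (0, 0) ∧ evalReal G x y < 0)

open MvPolynomial

lemma eval_smul_of_isHomogeneous {R : Type*} [CommRing R] {n : ℕ}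
    {p : MvPolynomial (Fin 2) R} (hp : p.IsHomogeneous n) (c : R) (v : Fin 2 → R) :
    MvPolynomial.eval (fun i => c * v i) p = c ^ n * MvPolynomial.eval v p := by
  rw [MvPolynomial.eval_eq, MvPolynomial.eval_eq, Finset.mul_sum]
  refine Finset.sum_congr rfl fun d hd => ?_
  have hdeg : (∑ i ∈ d.support, d i) = n := by
    have := hp (MvPolynomial.mem_support_iff.mp hd)
    change Finsupp.weight (fun _ => 1) d = n at this
    rw [← Finsupp.degree_eq_weight_one] at this
    simpa [Finsupp.degree_apply] using this
  calc p.coeff d * ∏ i ∈ d.support, (c * v i) ^ d i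
      = p.coeff d * ((∏ i ∈ d.support, c ^ d i) * ∏ i ∈ d.support, v i ^ d i) := by
        rw [← Finset.prod_mul_distrib]; simp [mul_pow]
    _ = c ^ n * (p.coeff d * ∏ i ∈ d.support, v i ^ d i) := by
        rw [Finset.prod_pow_eq_pow_sum, hdeg]; ring

lemma vec_two_eq {R : Type*} (v : Fin 2 → R) : ![v 0, v 1] = v := by
  funext i; fin_cases i <;> rfl

lemma evalReal_eq_eval_map (G : MvPolynomial (Fin 2) ℤ) (x y : ℝ) :
    evalReal G x y = MvPolynomial.eval ![x, y] (MvPolynomial.map (Int.castRingHom ℝ) G) := by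
  rw [evalReal, MvPolynomial.aeval_def, ← MvPolynomial.eval_map, algebraMap_int_eq]

lemma evalReal_intCast (G : MvPolynomial (Fin 2) ℤ) (a b : ℤ) :
    evalReal G (a : ℝ) (b : ℝ) = ((MvPolynomial.eval ![a, b] G : ℤ) : ℝ) := by
  have h := MvPolynomial.eval₂_comp_left (Int.castRingHom ℝ) (RingHom.id ℤ) ![a, b] G
  rw [evalReal, MvPolynomial.aeval_def, algebraMap_int_eq]
  show MvPolynomial.eval₂ (Int.castRingHom ℝ) ![(a:ℝ),(b:ℝ)] G
      = (Int.castRingHom ℝ) (MvPolynomial.eval₂ (RingHom.id ℤ) ![a,b] G)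
  rw [h]
  congr 1
  funext i; fin_cases i <;> simp

lemma continuous_evalReal (G : MvPolynomial (Fin 2) ℤ) :
    Continuous fun z : ℝ × ℝ => evalReal G z.1 z.2 := by
  simp only [evalReal_eq_eval_map]
  exact (MvPolynomial.continuous_eval _).comp
    (continuous_pi fun i => by fin_cases i <;> simp <;> [exact continuous_fst; exact continuous_snd])

/-- **Lemma 2.3.** If `F ∈ ℤ[x,y]` has degree 4, `F(0,0) = 0`, and the
degree-4 homogeneous part `F₄` is negative semi-definite or indefinite, then
`inf_{(x,y) ∈ ℤ²} F(x,y) = -∞`. -/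
theorem negsemidef_or_indefinite_inf_neg_infty
    (F : MvPolynomial (Fin 2) ℤ) (hdeg : F.totalDegree = 4)
    (h0 : MvPolynomial.eval ![0, 0] F = 0)
    (h4 : NegSemidef2 (MvPolynomial.homogeneousComponent 4 F) ∨
      Indefinite2 (MvPolynomial.homogeneousComponent 4 F)) :
    ∀ M : ℤ, ∃ x y : ℤ, MvPolynomial.eval ![x, y] F < -M := by
  intro M
  -- Step 1 : F4 ≠ 0
  have hFne : F ≠ 0 := by
    intro h; rw [h] at hdeg; simp at hdeg
  have hF4ne : MvPolynomial.homogeneousComponent 4 F ≠ 0 := by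
    obtain ⟨d, hdmem, hdsum⟩ :=
      Finset.exists_mem_eq_sup F.support (support_nonempty.mpr hFne)
        (fun m => m.sum fun _ e => e)
    intro h
    have hd4 : d.degree = 4 := by
      rw [← hdeg, MvPolynomial.totalDegree, hdsum]; rfl
    have hcoeff : MvPolynomial.coeff d (MvPolynomial.homogeneousComponent 4 F)
        = MvPolynomial.coeff d F := by
      rw [MvPolynomial.coeff_homogeneousComponent, if_pos hd4]
    exact MvPolynomial.mem_support_iff.mp hdmem (by rw [← hcoeff, h]; simp)
  -- Step 2 : a real point where F4 < 0
  have hreal : ∃ x y : ℝ, evalReal (MvPolynomial.homogeneousComponent 4 F) x y < 0 := by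
    rcases h4 with hns | hind
    · by_contra hno
      push_neg at hno
      apply hF4ne
      have hmap : MvPolynomial.map (Int.castRingHom ℝ)
          (MvPolynomial.homogeneousComponent 4 F) = 0 := by
        apply MvPolynomial.funext
        intro v
        have := le_antisymm (hns (v 0) (v 1)) (hno (v 0) (v 1))
        rw [evalReal_eq_eval_map, vec_two_eq] at this
        simpa using this
      exact MvPolynomial.map_injective _ Int.cast_injective (by simpa using hmap)
    · obtain ⟨x, y, _, hxy⟩ := hind.2
      exact ⟨x, y, hxy⟩
  obtain ⟨x, y, hxy⟩ := hreal
  -- Step 3 : a rational point where F4 < 0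
  have hopen : IsOpen {z : ℝ × ℝ |
      evalReal (MvPolynomial.homogeneousComponent 4 F) z.1 z.2 < 0} :=
    isOpen_lt (continuous_evalReal _) continuous_const
  have hdense : DenseRange (fun pq : ℚ × ℚ => ((pq.1 : ℝ), (pq.2 : ℝ))) :=
    Rat.denseRange_cast.prodMap Rat.denseRange_cast
  obtain ⟨⟨p, q⟩, hpq⟩ := hdense.exists_mem_open hopen ⟨(x, y), hxy⟩
  simp only [Set.mem_setOf_eq] at hpq
  -- Step 4 : an integer point where F4 < 0
  obtain ⟨c, hcdef⟩ : ∃ z : ℤ, z = (p.den : ℤ) * q.den := ⟨_, rfl⟩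
  obtain ⟨a, hadef⟩ : ∃ z : ℤ, z = p.num * q.den := ⟨_, rfl⟩
  obtain ⟨b, hbdef⟩ : ∃ z : ℤ, z = q.num * p.den := ⟨_, rfl⟩
  have hc0 : 0 < c := hcdef ▸ mul_pos (Int.natCast_pos.mpr p.pos) (Int.natCast_pos.mpr q.pos)
  have hpden : ((p.den : ℝ)) ≠ 0 := Nat.cast_ne_zero.mpr p.den_nz
  have hqden : ((q.den : ℝ)) ≠ 0 := Nat.cast_ne_zero.mpr q.den_nz
  have ha : (a : ℝ) = (c : ℝ) * (p : ℝ) := by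
    rw [hadef, hcdef, Rat.cast_def]; push_cast; field_simp
  have hb : (b : ℝ) = (c : ℝ) * (q : ℝ) := by
    rw [hbdef, hcdef, Rat.cast_def]; push_cast; field_simp
  have hF4ab : MvPolynomial.eval ![a, b] (MvPolynomial.homogeneousComponent 4 F) ≤ -1 := by
    have hhom : (MvPolynomial.map (Int.castRingHom ℝ)
        (MvPolynomial.homogeneousComponent 4 F)).IsHomogeneous 4 :=
      (MvPolynomial.homogeneousComponent_isHomogeneous 4 F).map _
    have hsc := eval_smul_of_isHomogeneous hhom (c : ℝ) ![(p : ℝ), (q : ℝ)]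
    have hvec : ![(a : ℝ), (b : ℝ)] = fun i => (c : ℝ) * ![(p : ℝ), (q : ℝ)] i := by
      funext i; fin_cases i <;> simp [ha, hb]
    have hlt : evalReal (MvPolynomial.homogeneousComponent 4 F) (a : ℝ) (b : ℝ) < 0 := by
      rw [evalReal_eq_eval_map, hvec, hsc]
      rw [evalReal_eq_eval_map] at hpq
      have hc4 : (0 : ℝ) < (c : ℝ) ^ 4 := by positivity
      exact mul_neg_of_pos_of_neg hc4 hpq
    rw [evalReal_intCast] at hlt
    have : MvPolynomial.eval ![a, b] (MvPolynomial.homogeneousComponent 4 F) < 0 := by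
      exact_mod_cast hlt
    omega
  -- Step 5 : constant component vanishes
  have hvec0 : (![0, 0] : Fin 2 → ℤ) = fun _ => 0 := by funext i; fin_cases i <;> rfl
  have hcoeff0 : MvPolynomial.coeff 0 F = 0 := by
    have h0' := h0
    rw [hvec0, MvPolynomial.eval_zero'] at h0'
    rw [← MvPolynomial.constantCoeff_eq]; exact h0'
  have hc0' : ∀ v : Fin 2 → ℤ,
      MvPolynomial.eval v (MvPolynomial.homogeneousComponent 0 F) = 0 := by
    intro v
    rw [MvPolynomial.homogeneousComponent_zero, hcoeff0]
    simp
  -- Step 6 : the key scaling identity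
  have key : ∀ t : ℤ, MvPolynomial.eval ![t * a, t * b] F
      = t ^ 4 * MvPolynomial.eval ![a, b] (MvPolynomial.homogeneousComponent 4 F)
        + t ^ 3 * MvPolynomial.eval ![a, b] (MvPolynomial.homogeneousComponent 3 F)
        + t ^ 2 * MvPolynomial.eval ![a, b] (MvPolynomial.homogeneousComponent 2 F)
        + t * MvPolynomial.eval ![a, b] (MvPolynomial.homogeneousComponent 1 F) := by
    intro t
    have he : ∀ i : ℕ,
        MvPolynomial.eval ![t * a, t * b] (MvPolynomial.homogeneousComponent i F)
        = t ^ i * MvPolynomial.eval ![a, b] (MvPolynomial.homogeneousComponent i F) := by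
      intro i
      have hs := eval_smul_of_isHomogeneous
        (MvPolynomial.homogeneousComponent_isHomogeneous i F) t ![a, b]
      have hv : (![t * a, t * b] : Fin 2 → ℤ) = fun i => t * ![a, b] i := by
        funext j; fin_cases j <;> simp
      rw [hv]; exact hs
    conv_lhs => rw [← MvPolynomial.sum_homogeneousComponent F, hdeg]
    rw [map_sum]
    simp only [he]
    rw [Finset.sum_range_succ, Finset.sum_range_succ, Finset.sum_range_succ,
      Finset.sum_range_succ, Finset.sum_range_one]
    rw [hc0' ![a, b]]
    ring
  -- Step 7 : conclude
  set c1 := MvPolynomial.eval ![a, b] (MvPolynomial.homogeneousComponent 1 F) with hc1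
  set c2 := MvPolynomial.eval ![a, b] (MvPolynomial.homogeneousComponent 2 F) with hc2
  set c3 := MvPolynomial.eval ![a, b] (MvPolynomial.homogeneousComponent 3 F) with hc3
  set c4 := MvPolynomial.eval ![a, b] (MvPolynomial.homogeneousComponent 4 F) with hc4
  clear_value c1 c2 c3 c4
  obtain ⟨t, htdef⟩ : ∃ z : ℤ, z = 1 + |c1| + |c2| + |c3| + |M| := ⟨_, rfl⟩
  have ht1 : (1 : ℤ) ≤ t := by
    have := abs_nonneg c1; have := abs_nonneg c2; have := abs_nonneg c3
    have := abs_nonneg M; omega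
  have ht0 : (0 : ℤ) < t := by omega
  have ht3 : (1 : ℤ) ≤ t ^ 3 := one_le_pow₀ ht1
  refine ⟨t * a, t * b, ?_⟩
  rw [key t]
  have h3 : t ^ 3 * c3 ≤ t ^ 3 * |c3| :=
    mul_le_mul_of_nonneg_left (le_abs_self c3) (by positivity)
  have h2a : t ^ 2 * c2 ≤ t ^ 2 * |c2| :=
    mul_le_mul_of_nonneg_left (le_abs_self c2) (by positivity)
  have h2b : t ^ 2 * |c2| ≤ t ^ 3 * |c2| :=
    mul_le_mul_of_nonneg_right (pow_le_pow_right₀ ht1 (by norm_num)) (abs_nonneg c2)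
  have h1a : t * c1 ≤ t * |c1| :=
    mul_le_mul_of_nonneg_left (le_abs_self c1) (by positivity)
  have h1b : t * |c1| ≤ t ^ 3 * |c1| := by
    have : t ^ 1 ≤ t ^ 3 := pow_le_pow_right₀ ht1 (by norm_num)
    have := mul_le_mul_of_nonneg_right this (abs_nonneg c1)
    simpa [pow_one] using this
  have h4' : t ^ 4 * c4 ≤ t ^ 4 * (-1) :=
    mul_le_mul_of_nonneg_left hF4ab (by positivity)
  have heq2 : t ^ 3 * |c3| + t ^ 3 * |c2| + t ^ 3 * |c1|
      = t ^ 3 * t - t ^ 3 - t ^ 3 * |M| := by rw [htdef]; ring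
  have ht4 : t ^ 4 * (-1) = -(t ^ 3 * t) := by ring
  have hm : |M| ≤ t ^ 3 * |M| := le_mul_of_one_le_left (abs_nonneg M) ht3
  have hM : M ≤ |M| := le_abs_self M
  linarith
end
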